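/- Let K be a field of characteristic zero, a ≥ b ≥ 1, and let A_{a,b} = K[x,y]/(x^{a+1}, y^{b+1}, xy), with X, Y the images of x, y and maximal ideal m = (X, Y). Then every nonzero element f ∈ m is associated to an element of the form αX^k + βY^s: there exist scalars α, β ∈ K not both zero, integers 1 ≤ k ≤ a and 1 ≤ s ≤ b, and a unit c ∈ A_{a,b}^× such that f = (αX^k + βY^s)·c. -/

import Mathlib

open MvPolynomial

/-- The algebra `A_{a,b} = K[x,y]/(x^{a+1}, y^{b+1}, xy)`. -/
abbrev Aab (K : Type*) [Field K] (a b : ℕ) : Type _ :=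
  MvPolynomial (Fin 2) K ⧸
    Ideal.span {(X 0 : MvPolynomial (Fin 2) K) ^ (a + 1),
      (X 1 : MvPolynomial (Fin 2) K) ^ (b + 1),
      (X 0 : MvPolynomial (Fin 2) K) * X 1}

/-- The image of `x` in `A_{a,b}`. -/
noncomputable def AabX (K : Type*) [Field K] (a b : ℕ) : Aab K a b :=
  Ideal.Quotient.mk _ (X 0 : MvPolynomial (Fin 2) K)

/-- The image of `y` in `A_{a,b}`. -/
noncomputable def AabY (K : Type*) [Field K] (a b : ℕ) : Aab K a b :=
  Ideal.Quotient.mk _ (X 1 : MvPolynomial (Fin 2) K)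

namespace Stmt14Aux

open Finset

variable {K : Type*} [Field K]

private lemma mem_ideal_of_coeffs (a b : ℕ)
    (q : MvPolynomial (Fin 2) K)
    (h0 : ∀ i ≤ a, MvPolynomial.coeff (Finsupp.single 0 i) q = 0)
    (h1 : ∀ j, 1 ≤ j → j ≤ b → MvPolynomial.coeff (Finsupp.single 1 j) q = 0) :
    q ∈ Ideal.span {(X 0 : MvPolynomial (Fin 2) K) ^ (a + 1),
      (X 1 : MvPolynomial (Fin 2) K) ^ (b + 1),
      (X 0 : MvPolynomial (Fin 2) K) * X 1} := by
  classical
  nth_rewrite 1 [q.as_sum]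
  apply Ideal.sum_mem
  intro d _
  by_cases hd1 : d 1 = 0
  · -- d = single 0 (d 0)
    have hd : d = Finsupp.single 0 (d 0) := by
      ext i; fin_cases i <;> simp [hd1]
    by_cases hda : d 0 ≤ a
    · rw [hd, h0 _ hda]; simp
    · have hdvd : (X 0 : MvPolynomial (Fin 2) K) ^ (a + 1) ∣
          monomial d (coeff d q) := by
        rw [X_pow_eq_monomial, monomial_dvd_monomial]
        refine ⟨Or.inr ?_, one_dvd _⟩
        intro i
        fin_cases i <;> simp [hd1] <;> omega
      obtain ⟨r, hr⟩ := hdvd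
      rw [hr]
      exact Ideal.mul_mem_right _ _ (Ideal.subset_span (by simp))
  · by_cases hd0 : d 0 = 0
    · have hd : d = Finsupp.single 1 (d 1) := by
        ext i; fin_cases i <;> simp [hd0]
      by_cases hdb : d 1 ≤ b
      · rw [hd, h1 _ (by omega) hdb]; simp
      · have hdvd : (X 1 : MvPolynomial (Fin 2) K) ^ (b + 1) ∣
            monomial d (coeff d q) := by
          rw [X_pow_eq_monomial, monomial_dvd_monomial]
          refine ⟨Or.inr ?_, one_dvd _⟩
          intro i
          fin_cases i <;> simp [hd0] <;> omega
        obtain ⟨r, hr⟩ := hdvd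
        rw [hr]
        exact Ideal.mul_mem_right _ _ (Ideal.subset_span (by simp))
    · have hdvd : (X 0 : MvPolynomial (Fin 2) K) * X 1 ∣
          monomial d (coeff d q) := by
        have : (X 0 : MvPolynomial (Fin 2) K) * X 1 =
            monomial (Finsupp.single 0 1 + Finsupp.single 1 1) 1 := by
          rw [X, X, monomial_mul, one_mul]
        rw [this, monomial_dvd_monomial]
        refine ⟨Or.inr ?_, one_dvd _⟩
        intro i
        fin_cases i <;> simp <;> omega
      obtain ⟨r, hr⟩ := hdvd
      rw [hr]
      exact Ideal.mul_mem_right _ _ (Ideal.subset_span (by simp))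

private lemma esum (s : Fin 2) (m n : ℕ) (c : ℕ → K) :
    coeff (Finsupp.single s m)
      (∑ i ∈ Icc 1 n, c i • (X s : MvPolynomial (Fin 2) K) ^ i)
    = if m ∈ Icc 1 n then c m else 0 := by
  classical
  rw [coeff_sum]
  have : ∀ i ∈ Icc 1 n, c i • coeff (Finsupp.single s m)
      ((X s : MvPolynomial (Fin 2) K) ^ i) = if i = m then c i else 0 := by
    intro i _
    rw [X_pow_eq_monomial, coeff_monomial]
    by_cases h : i = m
    · subst h; rw [if_pos rfl, if_pos rfl, smul_eq_mul, mul_one]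
    · rw [if_neg (fun hh => h ((Finsupp.single_injective s) hh)), if_neg h, smul_zero]
  simp_rw [coeff_smul]
  rw [Finset.sum_congr rfl this, Finset.sum_ite_eq' (Icc 1 n) m c]

private lemma ecross (s t : Fin 2) (hst : s ≠ t) (m n : ℕ) (c : ℕ → K) :
    coeff (Finsupp.single s m)
      (∑ j ∈ Icc 1 n, c j • (X t : MvPolynomial (Fin 2) K) ^ j) = 0 := by
  rw [coeff_sum]
  apply Finset.sum_eq_zero
  intro j hj
  rw [coeff_smul, X_pow_eq_monomial, coeff_monomial, if_neg, smul_zero]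
  rw [Finsupp.single_eq_single_iff]
  push_neg
  have hj1 : 1 ≤ j := (Finset.mem_Icc.mp hj).1
  exact ⟨fun h => absurd h hst.symm, fun h => absurd h (by omega)⟩

private lemma mk_eq_sum (a b : ℕ) (p : MvPolynomial (Fin 2) K) (hp : coeff 0 p = 0) :
    Ideal.Quotient.mk (Ideal.span {(X 0 : MvPolynomial (Fin 2) K) ^ (a + 1),
      (X 1 : MvPolynomial (Fin 2) K) ^ (b + 1),
      (X 0 : MvPolynomial (Fin 2) K) * X 1}) p
      = ∑ i ∈ Icc 1 a, coeff (Finsupp.single 0 i) p •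
          (Ideal.Quotient.mk _ (X 0 : MvPolynomial (Fin 2) K)) ^ i
      + ∑ j ∈ Icc 1 b, coeff (Finsupp.single 1 j) p •
          (Ideal.Quotient.mk _ (X 1 : MvPolynomial (Fin 2) K)) ^ j := by
  classical
  set N : MvPolynomial (Fin 2) K :=
    ∑ i ∈ Icc 1 a, coeff (Finsupp.single 0 i) p • (X 0 : MvPolynomial (Fin 2) K) ^ i
    + ∑ j ∈ Icc 1 b, coeff (Finsupp.single 1 j) p • (X 1 : MvPolynomial (Fin 2) K) ^ j
    with hN
  have hmem : p - N ∈ Ideal.span {(X 0 : MvPolynomial (Fin 2) K) ^ (a + 1),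
      (X 1 : MvPolynomial (Fin 2) K) ^ (b + 1),
      (X 0 : MvPolynomial (Fin 2) K) * X 1} := by
    apply mem_ideal_of_coeffs
    · intro i hi
      rw [coeff_sub, hN, coeff_add, esum, ecross 0 1 (by norm_num)]
      rcases Nat.eq_zero_or_pos i with rfl | hi1
      · rw [if_neg (by simp), Finsupp.single_zero, hp]; ring
      · rw [if_pos (Finset.mem_Icc.mpr ⟨hi1, hi⟩)]; ring
    · intro j hj1 hjb
      rw [coeff_sub, hN, coeff_add, esum, ecross 1 0 (by norm_num)]
      rw [if_pos (Finset.mem_Icc.mpr ⟨hj1, hjb⟩)]; ring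
  calc Ideal.Quotient.mk _ p = Ideal.Quotient.mk _ N := Ideal.Quotient.eq.mpr hmem
    _ = _ := by
        rw [← Ideal.Quotient.mkₐ_eq_mk (R₁ := K)]
        simp only [hN, map_add, map_sum, map_smul, map_pow]

private lemma onevar {A : Type*} [CommRing A] [Algebra K A]
    (t : A) (n k : ℕ) (γ : ℕ → K)
    (hk1 : 1 ≤ k) (hkn : k ≤ n) (hγ : ∀ i, 1 ≤ i → i < k → γ i = 0) (hγk : γ k ≠ 0) :
    ∃ v : A, (γ k • t ^ k) * (1 + t * v) = ∑ i ∈ Icc 1 n, γ i • t ^ i := by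
  refine ⟨∑ i ∈ Icc 1 (n - k), (γ (k + i) / γ k) • t ^ (i - 1), ?_⟩
  have htv : t * ∑ i ∈ Icc 1 (n - k), (γ (k + i) / γ k) • t ^ (i - 1)
      = ∑ i ∈ Icc 1 (n - k), (γ (k + i) / γ k) • t ^ i := by
    rw [Finset.mul_sum]
    refine Finset.sum_congr rfl fun i hi => ?_
    have h1 : 1 ≤ i := (Finset.mem_Icc.mp hi).1
    rw [mul_smul_comm, ← pow_succ']
    congr 2
    omega
  rw [htv, mul_add, mul_one, Finset.mul_sum]
  have hterm : ∀ i ∈ Icc 1 (n - k),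
      (γ k • t ^ k) * ((γ (k + i) / γ k) • t ^ i) = γ (k + i) • t ^ (k + i) := by
    intro i _
    rw [smul_mul_smul_comm, ← pow_add, mul_div_cancel₀ _ hγk]
  rw [Finset.sum_congr rfl hterm]
  have hre : ∑ i ∈ Icc 1 (n - k), γ (k + i) • t ^ (k + i)
      = ∑ j ∈ Icc (k + 1) n, γ j • t ^ j := by
    have : Icc (k + 1) n = (Icc 1 (n - k)).map (addLeftEmbedding k) := by
      rw [Finset.map_add_left_Icc]
      congr 1
      omega
    rw [this, Finset.sum_map]
    rfl
  rw [hre]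
  have hsplit : ∑ j ∈ Icc k n, γ j • t ^ j
      = γ k • t ^ k + ∑ j ∈ Icc (k + 1) n, γ j • t ^ j := by
    rw [Finset.Icc_eq_cons_Ioc hkn, Finset.sum_cons, Finset.Icc_add_one_left_eq_Ioc]
  rw [← hsplit]
  apply Finset.sum_subset
  · intro j hj
    rw [Finset.mem_Icc] at *
    omega
  · intro j hj hj'
    rw [Finset.mem_Icc] at *
    rw [hγ j (by omega) (by omega), zero_smul]

end Stmt14Aux

open Stmt14Aux Finset in
set_option maxHeartbeats 1000000 in
set_option synthInstance.maxHeartbeats 400000 in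
/-- in `A_{a,b}` with `a ≥ b ≥ 1`, every nonzero element `f` of the maximal
ideal `m = (X, Y)` is associated to an element `α X^k + β Y^s` with `α, β` not both zero,
`1 ≤ k ≤ a` and `1 ≤ s ≤ b`. -/
theorem stmt14 (K : Type*) [Field K] [CharZero K] (a b : ℕ) (hb : 1 ≤ b) (hab : b ≤ a)
    (f : Aab K a b) (hf0 : f ≠ 0)
    (hfm : f ∈ Ideal.span {AabX K a b, AabY K a b}) :
    ∃ α β : K, (α ≠ 0 ∨ β ≠ 0) ∧ ∃ k s : ℕ, 1 ≤ k ∧ k ≤ a ∧ 1 ≤ s ∧ s ≤ b ∧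
      ∃ c : (Aab K a b)ˣ, f = (α • AabX K a b ^ k + β • AabY K a b ^ s) * c := by
  classical
  set I : Ideal (MvPolynomial (Fin 2) K) :=
    Ideal.span {(X 0 : MvPolynomial (Fin 2) K) ^ (a + 1),
      (X 1 : MvPolynomial (Fin 2) K) ^ (b + 1),
      (X 0 : MvPolynomial (Fin 2) K) * X 1} with hI
  set Xq := AabX K a b with hXq
  set Yq := AabY K a b with hYq
  -- relations
  have hXa : Xq ^ (a + 1) = 0 := by
    rw [hXq, AabX, ← map_pow, Ideal.Quotient.eq_zero_iff_mem]
    exact Ideal.subset_span (by simp)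
  have hYb : Yq ^ (b + 1) = 0 := by
    rw [hYq, AabY, ← map_pow, Ideal.Quotient.eq_zero_iff_mem]
    exact Ideal.subset_span (by simp)
  have hXY : Xq * Yq = 0 := by
    rw [hXq, hYq, AabX, AabY, ← map_mul, Ideal.Quotient.eq_zero_iff_mem]
    exact Ideal.subset_span (by simp)
  have hXkY : ∀ k, 1 ≤ k → Xq ^ k * Yq = 0 := by
    intro k hk
    have hpow : Xq ^ k = Xq ^ (k - 1) * Xq := by
      rw [← pow_succ]; congr 1; omega
    rw [hpow, mul_assoc, hXY, mul_zero]
  have hYsX : ∀ s, 1 ≤ s → Yq ^ s * Xq = 0 := by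
    intro s hs
    have hpow : Yq ^ s = Yq ^ (s - 1) * Yq := by
      rw [← pow_succ]; congr 1; omega
    rw [hpow, mul_assoc, mul_comm Yq Xq, hXY, mul_zero]
  have hXnil : IsNilpotent Xq := ⟨a + 1, hXa⟩
  have hYnil : IsNilpotent Yq := ⟨b + 1, hYb⟩
  -- representation
  rw [Ideal.mem_span_pair] at hfm
  obtain ⟨g, h, hgh⟩ := hfm
  obtain ⟨pg, rfl⟩ := Ideal.Quotient.mk_surjective g
  obtain ⟨ph, rfl⟩ := Ideal.Quotient.mk_surjective h
  set p : MvPolynomial (Fin 2) K := pg * X 0 + ph * X 1 with hpdef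
  have hfp : f = Ideal.Quotient.mk I p := by
    rw [← hgh]; rfl
  have hp0 : coeff 0 p = 0 := by
    have : constantCoeff p = 0 := by
      rw [hpdef, map_add, map_mul, map_mul, constantCoeff_X, constantCoeff_X,
        mul_zero, mul_zero, add_zero]
    exact this
  set α : ℕ → K := fun i => coeff (Finsupp.single 0 i) p with hα
  set β : ℕ → K := fun j => coeff (Finsupp.single 1 j) p with hβ
  have hrep : f = ∑ i ∈ Icc 1 a, α i • Xq ^ i + ∑ j ∈ Icc 1 b, β j • Yq ^ j := by
    rw [hfp]
    exact mk_eq_sum a b p hp0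
  by_cases hA : ∀ i ∈ Icc 1 a, α i = 0
  · by_cases hB : ∀ j ∈ Icc 1 b, β j = 0
    · exfalso
      apply hf0
      rw [hrep, Finset.sum_eq_zero (fun i hi => by rw [hA i hi, zero_smul]),
        Finset.sum_eq_zero (fun j hj => by show β j • Yq ^ j = 0; rw [hB j hj, zero_smul]), add_zero]
    · -- only Y part
      push_neg at hB
      have hex : ∃ s, 1 ≤ s ∧ s ≤ b ∧ β s ≠ 0 := by
        obtain ⟨j, hj, hj0⟩ := hB
        rw [Finset.mem_Icc] at hj
        exact ⟨j, hj.1, hj.2, hj0⟩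
      set s := Nat.find hex with hs
      obtain ⟨hs1, hsb, hβs⟩ := Nat.find_spec hex
      have hmin : ∀ j, 1 ≤ j → j < s → β j = 0 := by
        intro j hj1 hjs
        by_contra hc
        exact Nat.find_min hex hjs ⟨hj1, by omega, hc⟩
      obtain ⟨v, hv⟩ := onevar Yq b s β hs1 hsb hmin hβs
      have hunit : IsUnit (1 + Yq * v) :=
        (Commute.all Yq v |>.isNilpotent_mul_right hYnil).isUnit_one_add
      refine ⟨0, β s, Or.inr hβs, 1, s, le_refl 1, by omega, hs1, hsb, hunit.unit, ?_⟩
      rw [IsUnit.unit_spec, zero_smul, zero_add, hv, hrep,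
        Finset.sum_eq_zero (fun i hi => by rw [hA i hi, zero_smul]), zero_add]
  · push_neg at hA
    have hexk : ∃ k, 1 ≤ k ∧ k ≤ a ∧ α k ≠ 0 := by
      obtain ⟨i, hi, hi0⟩ := hA
      rw [Finset.mem_Icc] at hi
      exact ⟨i, hi.1, hi.2, hi0⟩
    set k := Nat.find hexk with hk
    obtain ⟨hk1, hka, hαk⟩ := Nat.find_spec hexk
    have hkmin : ∀ i, 1 ≤ i → i < k → α i = 0 := by
      intro i hi1 hik
      by_contra hc
      exact Nat.find_min hexk hik ⟨hi1, by omega, hc⟩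
    obtain ⟨v₁, hv₁⟩ := onevar Xq a k α hk1 hka hkmin hαk
    by_cases hB : ∀ j ∈ Icc 1 b, β j = 0
    · -- only X part
      have hunit : IsUnit (1 + Xq * v₁) :=
        (Commute.all Xq v₁ |>.isNilpotent_mul_right hXnil).isUnit_one_add
      refine ⟨α k, 0, Or.inl hαk, k, 1, hk1, hka, le_refl 1, hb, hunit.unit, ?_⟩
      rw [IsUnit.unit_spec, zero_smul, add_zero, hv₁, hrep,
        Finset.sum_eq_zero (s := Icc 1 b) (f := fun j => β j • Yq ^ j)
          (fun j hj => by show β j • Yq ^ j = 0; rw [hB j hj, zero_smul]), add_zero]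
    · push_neg at hB
      have hexs : ∃ s, 1 ≤ s ∧ s ≤ b ∧ β s ≠ 0 := by
        obtain ⟨j, hj, hj0⟩ := hB
        rw [Finset.mem_Icc] at hj
        exact ⟨j, hj.1, hj.2, hj0⟩
      set s := Nat.find hexs with hs
      obtain ⟨hs1, hsb, hβs⟩ := Nat.find_spec hexs
      have hsmin : ∀ j, 1 ≤ j → j < s → β j = 0 := by
        intro j hj1 hjs
        by_contra hc
        exact Nat.find_min hexs hjs ⟨hj1, by omega, hc⟩
      obtain ⟨v₂, hv₂⟩ := onevar Yq b s β hs1 hsb hsmin hβs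
      have hnil : IsNilpotent (Xq * v₁ + Yq * v₂) :=
        Commute.isNilpotent_add (Commute.all _ _)
          (Commute.all Xq v₁ |>.isNilpotent_mul_right hXnil)
          (Commute.all Yq v₂ |>.isNilpotent_mul_right hYnil)
      have hunit : IsUnit (1 + (Xq * v₁ + Yq * v₂)) := hnil.isUnit_one_add
      refine ⟨α k, β s, Or.inl hαk, k, s, hk1, hka, hs1, hsb, hunit.unit, ?_⟩
      rw [IsUnit.unit_spec]
      have hPz : (α k • Xq ^ k) * (Yq * v₂) = 0 := by
        rw [smul_mul_assoc, ← mul_assoc, hXkY k hk1, zero_mul, smul_zero]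
      have hQw : (β s • Yq ^ s) * (Xq * v₁) = 0 := by
        rw [smul_mul_assoc, ← mul_assoc, hYsX s hs1, zero_mul, smul_zero]
      have expand : (α k • Xq ^ k + β s • Yq ^ s) * (1 + (Xq * v₁ + Yq * v₂))
          = (α k • Xq ^ k) * (1 + Xq * v₁) + (β s • Yq ^ s) * (1 + Yq * v₂)
            + ((α k • Xq ^ k) * (Yq * v₂) + (β s • Yq ^ s) * (Xq * v₁)) := by
        generalize α k • Xq ^ k = P
        generalize β s • Yq ^ s = Q
        ring
      rw [expand, hPz, hQw, add_zero, add_zero, hv₁, hv₂, hrep]
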